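/- arXiv:1712.02291 — 3 statements merged into one kernel-verified Lean document; each statement's English description precedes it below -/
import Mathlib

section
/- For any square-summable sequence a: ℤ → ℝ and Δx > 0, the following identity holds: ‖D₊D₋(a)‖²_{ℓ²_Δ} = (4/Δx²) ‖D₊(a)‖²_{ℓ²_Δ} - (4/Δx²) ‖D(a)‖²_{ℓ²_Δ}, where D = (D₊ + D₋)/2 is the centered difference. -/
noncomputable section
def Dp (Δx : ℝ) (a : ℤ → ℝ) : ℤ → ℝ := fun j => (a (j + 1) - a j) / Δx
def Dm (Δx : ℝ) (a : ℤ → ℝ) : ℤ → ℝ := fun j => (a j - a (j - 1)) / Δx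
def Dc (Δx : ℝ) (a : ℤ → ℝ) : ℤ → ℝ := fun j => (Dp Δx a j + Dm Δx a j) / 2
def l2normSq (Δx : ℝ) (a : ℤ → ℝ) : ℝ := Δx * ∑' j : ℤ, (a j) ^ 2

/-- `‖D₊D₋(a)‖²_{ℓ²_Δ} = (4/Δx²)‖D₊(a)‖²_{ℓ²_Δ} - (4/Δx²)‖D(a)‖²_{ℓ²_Δ}`. -/
theorem stmt4 (Δx : ℝ) (hΔx : 0 < Δx) (a : ℤ → ℝ)
    (ha : Summable fun j : ℤ => (a j) ^ 2) :
    l2normSq Δx (Dp Δx (Dm Δx a))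
      = 4 / Δx ^ 2 * l2normSq Δx (Dp Δx a) - 4 / Δx ^ 2 * l2normSq Δx (Dc Δx a) := by
  have hx2 : (0:ℝ) < Δx ^ 2 := by positivity
  set d : ℤ → ℝ := Dp Δx a with hd
  have ha1 : Summable fun j : ℤ => a (j + 1) ^ 2 :=
    ((Equiv.addRight (1:ℤ)).summable_iff (f := fun j : ℤ => a j ^ 2)).mpr ha
  have hdsq : Summable fun j : ℤ => d j ^ 2 := by
    refine Summable.of_nonneg_of_le (fun j => sq_nonneg _) ?_
      ((ha1.add ha).mul_left (2 / Δx ^ 2))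
    intro j
    have h1 : (a (j+1) - a j) ^ 2 ≤ 2 * (a (j+1) ^ 2 + a j ^ 2) := by
      nlinarith [sq_nonneg (a (j+1) + a j)]
    have h2 : d j ^ 2 = (a (j+1) - a j) ^ 2 / Δx ^ 2 := by
      simp [hd, Dp, div_pow]
    rw [h2]
    calc (a (j+1) - a j) ^ 2 / Δx ^ 2 ≤ 2 * (a (j+1) ^ 2 + a j ^ 2) / Δx ^ 2 := by gcongr
      _ = 2 / Δx ^ 2 * (a (j+1) ^ 2 + a j ^ 2) := by ring
  have hdsq' : Summable fun j : ℤ => d (j - 1) ^ 2 :=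
    ((Equiv.subRight (1:ℤ)).summable_iff (f := fun j : ℤ => d j ^ 2)).mpr hdsq
  have hsum2 : Summable fun j : ℤ => 2 * d j ^ 2 + 2 * d (j - 1) ^ 2 :=
    (hdsq.mul_left 2).add (hdsq'.mul_left 2)
  have hadd : Summable fun j : ℤ => (d j + d (j - 1)) ^ 2 := by
    refine Summable.of_nonneg_of_le (fun j => sq_nonneg _) ?_ hsum2
    intro j
    nlinarith [sq_nonneg (d j - d (j - 1))]
  have hshift : ∑' j : ℤ, d (j - 1) ^ 2 = ∑' j : ℤ, d j ^ 2 :=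
    (Equiv.subRight (1:ℤ)).tsum_eq (f := fun j : ℤ => d j ^ 2)
  set S := ∑' j : ℤ, d j ^ 2 with hS
  set A := ∑' j : ℤ, (d j + d (j - 1)) ^ 2 with hA
  have key : ∑' j : ℤ, (d j - d (j - 1)) ^ 2 = 4 * S - A := by
    calc ∑' j : ℤ, (d j - d (j - 1)) ^ 2
        = ∑' j : ℤ, ((2 * d j ^ 2 + 2 * d (j - 1) ^ 2) - (d j + d (j - 1)) ^ 2) :=
          tsum_congr (fun j => by ring)
      _ = (∑' j : ℤ, (2 * d j ^ 2 + 2 * d (j - 1) ^ 2)) - A := Summable.tsum_sub hsum2 hadd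
      _ = (2 * S + 2 * S) - A := by
          rw [Summable.tsum_add (hdsq.mul_left 2) (hdsq'.mul_left 2), tsum_mul_left, tsum_mul_left,
            hshift]
      _ = 4 * S - A := by ring
  have hDpDm : ∀ j : ℤ, Dp Δx (Dm Δx a) j = (d j - d (j - 1)) / Δx := by
    intro j
    have h1 : j + 1 - 1 = j := by ring
    have h2 : j - 1 + 1 = j := by ring
    simp [Dp, Dm, hd, h1, h2]
  have hDc : ∀ j : ℤ, Dc Δx a j = (d j + d (j - 1)) / 2 := by
    intro j
    have h2 : j - 1 + 1 = j := by ring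
    simp [Dc, Dp, Dm, hd, h2]
  have e1 : l2normSq Δx (Dp Δx (Dm Δx a)) = Δx * ((4 * S - A) / Δx ^ 2) := by
    unfold l2normSq
    rw [tsum_congr (fun j => by rw [hDpDm j, div_pow]), tsum_div_const, key]
  have e2 : l2normSq Δx (Dp Δx a) = Δx * S := rfl
  have e3 : l2normSq Δx (Dc Δx a) = Δx * (A / 4) := by
    unfold l2normSq
    rw [tsum_congr (fun j => by rw [hDc j, div_pow]), tsum_div_const]
    norm_num
    exact Or.inl hA.symm
  rw [e1, e2, e3]
  field_simp
end
end

section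
/- For any square-summable sequence a: ℤ → ℝ and Δx > 0, one has ⟨D₊(a), a·𝒮⁺a⟩ = -(Δx²/3) ⟨D₊(a), (D₊(a))²⟩, where 𝒮⁺a is the sequence shifted by one: (𝒮⁺a)_j = a_{j+1}. -/
noncomputable section
def ip (Δx : ℝ) (u v : ℤ → ℝ) : ℝ := Δx * ∑' j : ℤ, u j * v j

/-- `⟨D₊(a), a·𝒮⁺a⟩ = -(Δx²/3)⟨D₊(a), (D₊(a))²⟩`. -/
theorem stmt7 (Δx : ℝ) (hΔx : 0 < Δx) (a : ℤ → ℝ)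
    (ha : Summable fun j : ℤ => (a j) ^ 2) :
    ip Δx (Dp Δx a) (fun j => a j * a (j + 1))
      = -(Δx ^ 2 / 3) * ip Δx (Dp Δx a) (fun j => (Dp Δx a j) ^ 2) := by
  have hinj : Function.Injective (fun j : ℤ => j + 1) := fun x y h => by simpa using h
  have hsh : Summable fun j : ℤ => (a (j + 1)) ^ 2 := ha.comp_injective hinj
  have hg : Summable fun j : ℤ => 8 * ((a j) ^ 2 + (a (j + 1)) ^ 2) :=
    (ha.add hsh).mul_left 8
  have hev : ∀ᶠ j in Filter.cofinite, |a j| ≤ 1 := by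
    have h := ha.tendsto_cofinite_zero.eventually (eventually_le_nhds (by norm_num : (0:ℝ) < 1))
    filter_upwards [h] with j hj
    nlinarith [abs_nonneg (a j), sq_abs (a j)]
  have hev1 : ∀ᶠ j in Filter.cofinite, |a (j + 1)| ≤ 1 := by
    have h := hsh.tendsto_cofinite_zero.eventually (eventually_le_nhds (by norm_num : (0:ℝ) < 1))
    filter_upwards [h] with j hj
    nlinarith [abs_nonneg (a (j + 1)), sq_abs (a (j + 1))]
  have key : ∀ f : ℤ → ℝ,
      (∀ j, |a j| ≤ 1 → |a (j + 1)| ≤ 1 → |f j| ≤ 8 * ((a j) ^ 2 + (a (j + 1)) ^ 2)) →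
      Summable f := by
    intro f hf
    apply Summable.of_norm_bounded_eventually hg
    filter_upwards [hev, hev1] with j h1 h2
    simpa using hf j h1 h2
  have S1 : Summable fun j : ℤ => (a (j + 1) - a j) * (a j * a (j + 1)) := by
    apply key
    intro j h1 h2
    have e : |(a (j + 1) - a j) * (a j * a (j + 1))| = |a (j+1) - a j| * (|a j| * |a (j+1)|) := by
      rw [abs_mul, abs_mul]
    rw [e]
    have hd : |a (j+1) - a j| ≤ 2 := by
      calc |a (j+1) - a j| ≤ |a (j+1)| + |a j| := abs_sub _ _
        _ ≤ 2 := by linarith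
    nlinarith [abs_nonneg (a j), abs_nonneg (a (j+1)), sq_abs (a j), sq_abs (a (j+1)),
      sq_nonneg (|a j| - |a (j+1)|), mul_nonneg (abs_nonneg (a j)) (abs_nonneg (a (j+1))),
      abs_nonneg (a (j+1) - a j)]
  have S2 : Summable fun j : ℤ => (a (j + 1) - a j) ^ 3 := by
    apply key
    intro j h1 h2
    have e : |(a (j + 1) - a j) ^ 3| = |a (j+1) - a j| ^ 3 := by rw [abs_pow]
    rw [e]
    have hd : |a (j+1) - a j| ≤ 2 := by
      calc |a (j+1) - a j| ≤ |a (j+1)| + |a j| := abs_sub _ _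
        _ ≤ 2 := by linarith
    nlinarith [abs_nonneg (a (j+1) - a j), sq_abs (a (j+1) - a j),
      sq_nonneg (a (j+1) + a j), sq_nonneg (a (j+1) - a j)]
  have S3 : Summable fun j : ℤ => (a j) ^ 3 := by
    apply key
    intro j h1 h2
    have e : |(a j) ^ 3| = |a j| ^ 3 := by rw [abs_pow]
    rw [e]
    nlinarith [abs_nonneg (a j), sq_abs (a j), sq_nonneg (a (j+1)), abs_nonneg (a (j+1))]
  have S3' : Summable fun j : ℤ => (a (j + 1)) ^ 3 := S3.comp_injective hinj
  have hshift : (∑' j : ℤ, (a (j + 1)) ^ 3) = ∑' j : ℤ, (a j) ^ 3 :=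
    (Equiv.addRight (1 : ℤ)).tsum_eq fun j => (a j) ^ 3
  have hzero : (∑' j : ℤ, ((a (j + 1)) ^ 3 - (a j) ^ 3)) = 0 := by
    rw [Summable.tsum_sub S3' S3, hshift, sub_self]
  have hrel : (∑' j : ℤ, (a (j + 1) - a j) ^ 3)
      + 3 * (∑' j : ℤ, (a (j + 1) - a j) * (a j * a (j + 1))) = 0 := by
    rw [← tsum_mul_left, ← Summable.tsum_add S2 (S1.mul_left 3)]
    rw [← hzero]
    congr 1
    funext j
    ring
  have e1 : ∀ j : ℤ, Dp Δx a j * (a j * a (j + 1))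
      = ((a (j + 1) - a j) * (a j * a (j + 1))) / Δx := by
    intro j; simp only [Dp]; ring
  have e2 : ∀ j : ℤ, Dp Δx a j * (Dp Δx a j) ^ 2 = ((a (j + 1) - a j) ^ 3) / Δx ^ 3 := by
    intro j; simp only [Dp]; field_simp
  unfold ip
  simp_rw [e1, e2, tsum_div_const]
  have h3 : (∑' j : ℤ, (a (j + 1) - a j) ^ 3)
      = -3 * (∑' j : ℤ, (a (j + 1) - a j) * (a j * a (j + 1))) := by linarith
  rw [h3]
  field_simp
end
end

section
/- Let Δx, Δt > 0 and θ ∈ [0,1] satisfy the CFL condition Δt(1 - 2θ) ≤ Δx³/4. Then for any a ∈ ℓ²(ℤ): ‖a - (1-θ)Δt·D₊D₊D₋(a)‖²_{ℓ²_Δ} ≤ ‖a + θΔt·D₊D₊D₋(a)‖²_{ℓ²_Δ}. -/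
noncomputable section
def qq (a : ℤ → ℝ) (k : ℤ) : ℝ := ∑' j : ℤ, a j * a (j + k)

lemma hq (a : ℤ → ℝ) (k m : ℤ) :
    ∑' j : ℤ, a (j + k) * a (j + m) = qq a (m - k) := by
  have h := (Equiv.addRight k).tsum_eq (fun j : ℤ => a j * a (j + (m - k)))
  simp only [Equiv.coe_addRight] at h
  calc ∑' j : ℤ, a (j + k) * a (j + m)
      = ∑' j : ℤ, a (j + k) * a (j + k + (m - k)) :=
        tsum_congr (fun j => by rw [show j + k + (m - k) = j + m by ring])
    _ = qq a (m - k) := h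

lemma prodSummable (a : ℤ → ℝ) (ha : Summable fun j : ℤ => (a j) ^ 2)
    (k m : ℤ) : Summable fun j : ℤ => a (j + k) * a (j + m) := by
  have h1 : ∀ n : ℤ, Summable (fun j : ℤ => a (j + n) ^ 2) := by
    intro n
    have h := (Equiv.addRight n).summable_iff (f := fun j : ℤ => a j ^ 2)
    simp only [Function.comp_def, Equiv.coe_addRight] at h
    exact h.mpr ha
  rw [← summable_abs_iff]
  apply Summable.of_nonneg_of_le (fun j => abs_nonneg _) (fun j => ?_)
    (((h1 k).add (h1 m)).div_const 2)
  rw [abs_mul]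
  nlinarith [sq_nonneg (|a (j + k)| - |a (j + m)|), sq_abs (a (j + k)),
    sq_abs (a (j + m)), abs_nonneg (a (j + k)), abs_nonneg (a (j + m))]

lemma expand4 (a : ℤ → ℝ) (ha : Summable fun j : ℤ => (a j) ^ 2)
    (α β γ δ : ℝ) :
    ∑' j : ℤ, (α * a (j + 2) + β * a (j + 1) + γ * a j + δ * a (j - 1)) ^ 2
      = (α^2 + β^2 + γ^2 + δ^2) * qq a 0 + (2*(α*β + β*γ + γ*δ)) * qq a 1
        + (2*(α*γ + β*δ)) * qq a 2 + (2*(α*δ)) * qq a 3 := by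
  have hs := prodSummable a ha
  have hpt : ∀ j : ℤ, (α * a (j + 2) + β * a (j + 1) + γ * a j + δ * a (j - 1)) ^ 2
      = α^2 * (a (j+2) * a (j+2)) + (β^2 * (a (j+1) * a (j+1)) + (γ^2 * (a (j+0) * a (j+0))
        + (δ^2 * (a (j+(-1)) * a (j+(-1))) + ((2*(α*β)) * (a (j+1) * a (j+2))
        + ((2*(β*γ)) * (a (j+0) * a (j+1)) + ((2*(γ*δ)) * (a (j+(-1)) * a (j+0))
        + ((2*(α*γ)) * (a (j+0) * a (j+2)) + ((2*(β*δ)) * (a (j+(-1)) * a (j+1))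
        + (2*(α*δ)) * (a (j+(-1)) * a (j+2)))))))))) := by
    intro j
    rw [show a j = a (j + 0) by rw [add_zero], show a (j - 1) = a (j + (-1)) by rw [sub_eq_add_neg]]
    ring
  have H := (((hs 2 2).hasSum.mul_left (α^2)).add
    (((hs 1 1).hasSum.mul_left (β^2)).add
    (((hs 0 0).hasSum.mul_left (γ^2)).add
    (((hs (-1) (-1)).hasSum.mul_left (δ^2)).add
    (((hs 1 2).hasSum.mul_left (2*(α*β))).add
    (((hs 0 1).hasSum.mul_left (2*(β*γ))).add
    (((hs (-1) 0).hasSum.mul_left (2*(γ*δ))).add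
    (((hs 0 2).hasSum.mul_left (2*(α*γ))).add
    (((hs (-1) 1).hasSum.mul_left (2*(β*δ))).add
    ((hs (-1) 2).hasSum.mul_left (2*(α*δ))))))))))))
  rw [tsum_congr hpt, H.tsum_eq,
    hq a 2 2, hq a 1 1, hq a 0 0, hq a (-1) (-1), hq a 1 2, hq a 0 1,
    hq a (-1) 0, hq a 0 2, hq a (-1) 1, hq a (-1) 2]
  norm_num
  ring

def D3 (Δx : ℝ) (a : ℤ → ℝ) : ℤ → ℝ :=
  fun j => (a (j + 2) - 3 * a (j + 1) + 3 * a j - a (j - 1)) / Δx ^ 3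
set_option maxHeartbeats 1000000 in
/-- Under the CFL condition `Δt(1-2θ) ≤ Δx³/4`,
`‖𝒜_{-(1-θ)} a‖²_{ℓ²_Δ} ≤ ‖𝒜_θ a‖²_{ℓ²_Δ}`. -/
theorem stmt15 (Δx Δt θ : ℝ) (hΔx : 0 < Δx) (hΔt : 0 < Δt)
    (hθ : θ ∈ Set.Icc (0:ℝ) 1) (hCFL : Δt * (1 - 2 * θ) ≤ Δx ^ 3 / 4)
    (a : ℤ → ℝ) (ha : Summable fun j : ℤ => (a j) ^ 2) :
    l2normSq Δx (fun j => a j - (1 - θ) * Δt * D3 Δx a j)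
      ≤ l2normSq Δx (fun j => a j + θ * Δt * D3 Δx a j) := by
  obtain ⟨hθ0, hθ1⟩ := hθ
  have hΔx3 : (0:ℝ) < Δx ^ 3 := by positivity
  have hA : 0 < Δt / Δx ^ 3 := by positivity
  have hκ : (1 - 2 * θ) * (Δt / Δx ^ 3) ≤ 1 / 4 := by
    rw [show (1 - 2 * θ) * (Δt / Δx ^ 3) = (Δt * (1 - 2 * θ)) / Δx ^ 3 by ring,
      div_le_iff₀ hΔx3]
    nlinarith [hCFL]
  have hF0 := tsum_nonneg (L := SummationFilter.unconditional ℤ) (fun j : ℤ =>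
    sq_nonneg ((0:ℝ) * a (j+2) + 1 * a (j+1) + (-2) * a j + 1 * a (j-1)))
  rw [expand4 a ha 0 1 (-2) 1] at hF0
  have hE0 := tsum_nonneg (L := SummationFilter.unconditional ℤ) (fun j : ℤ =>
    sq_nonneg ((1:ℝ) * a (j+2) + (-1) * a (j+1) + (-1) * a j + 1 * a (j-1)))
  rw [expand4 a ha 1 (-1) (-1) 1] at hE0
  have hG0 := tsum_nonneg (L := SummationFilter.unconditional ℤ) (fun j : ℤ =>
    sq_nonneg ((1:ℝ) * a (j+2) + (-3) * a (j+1) + 3 * a j + (-1) * a (j-1)))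
  rw [expand4 a ha 1 (-3) 3 (-1)] at hG0
  have hpt1 : ∀ j : ℤ, a j - (1 - θ) * Δt * D3 Δx a j
      = (-((1-θ) * (Δt / Δx ^ 3))) * a (j+2) + (-3 * (-((1-θ) * (Δt / Δx ^ 3)))) * a (j+1)
        + (1 + 3 * (-((1-θ) * (Δt / Δx ^ 3)))) * a j + (-(-((1-θ) * (Δt / Δx ^ 3)))) * a (j-1) := by
    intro j
    simp only [D3]
    field_simp
    ring
  have hpt2 : ∀ j : ℤ, a j + θ * Δt * D3 Δx a j
      = (θ * (Δt / Δx ^ 3)) * a (j+2) + (-3 * (θ * (Δt / Δx ^ 3))) * a (j+1)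
        + (1 + 3 * (θ * (Δt / Δx ^ 3))) * a j + (-(θ * (Δt / Δx ^ 3))) * a (j-1) := by
    intro j
    simp only [D3]
    field_simp
    ring
  have e1 := (tsum_congr (fun j : ℤ => congrArg (· ^ 2) (hpt1 j))).trans
    (expand4 a ha _ _ _ _)
  have e2 := (tsum_congr (fun j : ℤ => congrArg (· ^ 2) (hpt2 j))).trans
    (expand4 a ha _ _ _ _)
  simp only [l2normSq]
  rw [e1, e2]
  apply mul_le_mul_of_nonneg_left ?_ hΔx.le
  set d := Δt / Δx ^ 3 with hdd
  set q0 := qq a 0 with hq0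
  set q1 := qq a 1 with hq1
  set q2 := qq a 2 with hq2
  set q3 := qq a 3 with hq3
  rcases le_or_gt 0 (1 - 2 * θ) with h | h
  · nlinarith [mul_nonneg (mul_nonneg hA.le hF0)
        (show (0:ℝ) ≤ 1 - 4 * ((1 - 2 * θ) * d) by linarith),
      mul_nonneg (mul_nonneg (mul_nonneg hA.le hA.le) h) hE0]
  · nlinarith [mul_nonneg hA.le hF0,
      mul_nonneg (mul_nonneg (mul_nonneg hA.le hA.le) (by linarith : (0:ℝ) ≤ 2 * θ - 1)) hG0]
end
end
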